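/- Let (W,S) be a finite Coxeter system. For w ∈ W define its extension E_w ∈ F₂^W as the indicator function of the coset w⟨S∖D(w)⟩. Then the collection {E_w : w ∈ W} is linearly independent over F₂. -/

import Mathlib

open Pointwise

/-- The extension `E_w` of `w`: the `F₂`-valued indicator function of the standard
coset `w⟨S∖D(w)⟩`, where `D(w)` is the right descent set of `w`. -/
noncomputable def coxeterExtension {B W : Type*} [Group W]
    {M : CoxeterMatrix B} (cs : CoxeterSystem M W) (w : W) : W → ZMod 2 :=
  Set.indicator (w • (Subgroup.closure (cs.simple '' {i : B | ¬ cs.IsRightDescent w i}) : Set W))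
    (fun _ => 1)

namespace CoxAux

open CoxeterSystem List

attribute [local instance] Classical.propDecidable

variable {B W : Type*} [Group W] {M : CoxeterMatrix B} (cs : CoxeterSystem M W)

local prefix:100 "s" => cs.simple
local prefix:100 "π" => cs.wordProd
local prefix:100 "ℓ" => cs.length
local prefix:100 "ris" => cs.rightInvSeq

lemma two_zmod (a b : ZMod 2) : a + b + b = a := by
  rw [add_assoc, CharTwo.add_self_eq_zero, add_zero]

lemma conj_eq_iff (g t x : W) : g * t * g⁻¹ = x ↔ t = g⁻¹ * x * g := by
  constructor
  · intro h; rw [← h]; group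
  · intro h; rw [h]; group

/-- The sign-permutation function attached to a simple reflection. -/
noncomputable def sigmaFun (i : B) : W × ZMod 2 → W × ZMod 2 :=
  fun p => (s i * p.1 * s i, p.2 + if p.1 = s i then 1 else 0)

lemma conj_simple_eq_simple_iff (i : B) (t : W) : s i * t * s i = s i ↔ t = s i := by
  rw [mul_assoc, mul_eq_left, mul_eq_one_iff_eq_inv, cs.inv_simple]

lemma sigmaFun_involutive (i : B) : Function.Involutive (sigmaFun cs i) := by
  rintro ⟨t, ε⟩
  simp only [sigmaFun]
  refine Prod.ext ?_ ?_
  · simp [mul_assoc, cs.simple_mul_simple_cancel_left, cs.simple_mul_simple_self]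
  · simp only [conj_simple_eq_simple_iff cs i t]
    exact two_zmod _ _

/-- The sign permutation attached to a simple reflection. -/
noncomputable def sigma (i : B) : Equiv.Perm (W × ZMod 2) :=
  (sigmaFun_involutive cs i).toPerm

lemma sigma_apply (i : B) (t : W) (ε : ZMod 2) :
    sigma cs i (t, ε) = (s i * t * s i, ε + if t = s i then 1 else 0) := rfl

/-- Applying a product of sigmas along a word. -/
lemma sigma_word_apply (ω : List B) (t : W) (ε : ZMod 2) :
    (List.map (sigma cs) ω).prod (t, ε)
      = (π ω * t * (π ω)⁻¹, ε + (((ris ω).count t : ℕ) : ZMod 2)) := by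
  induction ω generalizing ε with
  | nil => simp
  | cons i ω ih =>
    rw [List.map_cons, List.prod_cons, Equiv.Perm.mul_apply, ih, sigma_apply]
    have hl : cs.rightInvSeq (i :: ω) = ((π ω)⁻¹ * (s i) * (π ω)) :: cs.rightInvSeq ω := rfl
    refine Prod.ext ?_ ?_
    · simp only [wordProd_cons, mul_inv_rev, cs.inv_simple]
      group
    · have hcond : (π ω * t * (π ω)⁻¹ = s i) ↔ (t = (π ω)⁻¹ * s i * π ω) :=
        conj_eq_iff _ _ _
      rw [hl, List.count_cons]
      push_cast
      by_cases h : t = (π ω)⁻¹ * s i * π ω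
      · have h2 : π ω * t * (π ω)⁻¹ = s i := hcond.mpr h
        simp only [h2, if_true, beq_iff_eq, h.symm ▸ (rfl : t = t)]
        simp [← h]
        ring
      · have h2 : ¬ (π ω * t * (π ω)⁻¹ = s i) := fun hh => h (hcond.mp hh)
        have h3 : ¬ ((π ω)⁻¹ * s i * π ω = t) := fun hh => h hh.symm
        simp [h2, h3]

lemma pow_inv_simple (i i' : B) (k : ℕ) :
    ((s i * s i') ^ k)⁻¹ = (s i' * s i) ^ k := by
  rw [← inv_pow, mul_inv_rev, cs.inv_simple, cs.inv_simple]

lemma semiconj_simple (i i' : B) (k : ℕ) :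
    s i' * (s i * s i') ^ k = (s i' * s i) ^ k * s i' := by
  have h : SemiconjBy (s i') (s i * s i') (s i' * s i) := by
    unfold SemiconjBy; group
  exact (h.pow_right k).eq

/-- Explicit form of the right inversion sequence of an alternating word. -/
lemma ris_alternatingWord (i i' : B) (n : ℕ) :
    ris (alternatingWord i i' n)
      = ((List.range n).reverse).map (fun k => (s i' * s i) ^ k * s i') := by
  induction n with
  | zero => simp [alternatingWord]
  | succ n ih =>
    rw [alternatingWord_succ']
    have hcons : ris ((if Even n then i' else i) :: alternatingWord i i' n)
        = ((π (alternatingWord i i' n))⁻¹ * s (if Even n then i' else i)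
            * π (alternatingWord i i' n)) :: ris (alternatingWord i i' n) := rfl
    rw [hcons, ih, List.range_succ, List.reverse_append, List.reverse_singleton,
      List.singleton_append, List.map_cons]
    congr 1
    rw [cs.prod_alternatingWord_eq_mul_pow]
    by_cases hn : Even n
    · have hdiv : n / 2 + n / 2 = n := by
        have := Nat.even_iff.mp hn; omega
      rw [if_pos hn, if_pos hn, one_mul, pow_inv_simple, mul_assoc, semiconj_simple,
        ← mul_assoc, ← pow_add, hdiv]
    · have hdiv : n / 2 + 1 + n / 2 = n := by
        have := Nat.odd_iff.mp (Nat.not_even_iff_odd.mp hn); omega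
      rw [if_neg hn, if_neg hn, mul_inv_rev, pow_inv_simple, cs.inv_simple, semiconj_simple,
        ← mul_assoc, mul_assoc ((s i' * s i) ^ (n / 2)) (s i') (s i), ← pow_succ,
        ← pow_add]
      have hdiv2 : n / 2 + 1 + n / 2 = n := hdiv
      rw [hdiv2]

/-- Doubling: the right inversion sequence of the doubled alternating word. -/
lemma ris_alt_double (i i' : B) :
    ris (alternatingWord i i' (2 * M i i'))
      = ris (alternatingWord i i' (M i i')) ++ ris (alternatingWord i i' (M i i')) := by
  have hq : (s i' * s i) ^ M i i' = 1 := cs.simple_mul_simple_pow' i i'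
  rw [ris_alternatingWord, ris_alternatingWord, two_mul, List.range_add,
    List.reverse_append, List.map_append, List.map_reverse, List.map_map,
    List.map_reverse]
  congr 1
  rw [← List.map_reverse, ← List.map_reverse]
  apply List.map_congr_left
  intro x _
  simp only [Function.comp_apply]
  rw [pow_add, hq, one_mul]

lemma sigma_pow_eq_prod (i i' : B) (m : ℕ) :
    (sigma cs i * sigma cs i') ^ m
      = (List.map (sigma cs) (alternatingWord i i' (2 * m))).prod := by
  induction m with
  | zero => simp [alternatingWord]
  | succ m ih =>
    have h1 : 2 * (m + 1) = (2 * m + 1) + 1 := by ring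
    rw [h1, alternatingWord_succ', alternatingWord_succ']
    have h2 : ¬ Even (2 * m + 1) := by simp [parity_simps]
    have h3 : Even (2 * m) := even_two_mul m
    rw [if_neg h2, if_pos h3, List.map_cons, List.map_cons, List.prod_cons, List.prod_cons,
      ← ih, pow_succ']
    rw [mul_assoc]

lemma sigma_liftable : M.IsLiftable (sigma cs) := by
  intro i i'
  rw [sigma_pow_eq_prod]
  apply Equiv.ext
  rintro ⟨t, ε⟩
  rw [sigma_word_apply]
  have hπ : π (alternatingWord i i' (2 * M i i')) = 1 := by
      rw [cs.prod_alternatingWord_eq_mul_pow, if_pos (even_two_mul _)]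
      have : 2 * M i i' / 2 = M i i' := by omega
      rw [this, one_mul, cs.simple_mul_simple_pow]
  have hcount : ((ris (alternatingWord i i' (2 * M i i'))).count t : ZMod 2) = 0 := by
      rw [ris_alt_double, List.count_append]
      push_cast
      rw [CharTwo.add_self_eq_zero]
  rw [hπ, hcount]
  simp

/-- The sign representation on `W × ZMod 2`. -/
noncomputable def phi : W →* Equiv.Perm (W × ZMod 2) :=
  cs.lift ⟨sigma cs, sigma_liftable cs⟩

lemma phi_simple (i : B) : phi cs (s i) = sigma cs i :=
  cs.lift_apply_simple (sigma_liftable cs) i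

lemma phi_wordProd (ω : List B) : phi cs (π ω) = (List.map (sigma cs) ω).prod := by
  unfold CoxeterSystem.wordProd
  rw [map_list_prod, List.map_map]
  congr 1
  apply List.map_congr_left
  intro x _
  exact phi_simple cs x

/-- The parity of the number of times `t` occurs in the inversion sequence of
any word for `w`. -/
noncomputable def eta (w t : W) : ZMod 2 := ((phi cs w) (t, 0)).2

lemma eta_count (ω : List B) (t : W) :
    eta cs (π ω) t = (((ris ω).count t : ℕ) : ZMod 2) := by
  unfold eta
  rw [phi_wordProd, sigma_word_apply]
  simp

lemma phi_apply (w t : W) (ε : ZMod 2) :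
    phi cs w (t, ε) = (w * t * w⁻¹, ε + eta cs w t) := by
  obtain ⟨ω, rfl⟩ := cs.wordProd_surjective w
  rw [phi_wordProd, sigma_word_apply, eta_count]

lemma eta_one (t : W) : eta cs 1 t = 0 := by
  unfold eta
  rw [map_one]
  rfl

lemma eta_mul (u v t : W) :
    eta cs (u * v) t = eta cs v t + eta cs u (v * t * v⁻¹) := by
  unfold eta
  rw [map_mul, Equiv.Perm.mul_apply, phi_apply, phi_apply, phi_apply]
  simp

lemma eta_simple (i : B) (t : W) :
    eta cs (s i) t = if t = s i then 1 else 0 := by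
  unfold eta
  rw [phi_simple, sigma_apply]
  simp

lemma eta_inv_add (u x : W) : eta cs u x + eta cs u⁻¹ (u * x * u⁻¹) = 0 := by
  have h := eta_mul cs u⁻¹ u x
  rw [inv_mul_cancel, eta_one] at h
  exact h.symm

lemma eta_refl_self {t : W} (ht : cs.IsReflection t) : eta cs t t = 1 := by
  obtain ⟨w, i, rfl⟩ := ht
  have key : eta cs (w * s i * w⁻¹) (w * s i * w⁻¹)
      = eta cs (s i * w⁻¹) (w * s i * w⁻¹) + eta cs w (s i) := by
    rw [mul_assoc, eta_mul]
    congr 2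
    group
  have key2 : eta cs (s i * w⁻¹) (w * s i * w⁻¹)
      = eta cs w⁻¹ (w * s i * w⁻¹) + 1 := by
    rw [eta_mul]
    have h : w⁻¹ * (w * s i * w⁻¹) * w⁻¹⁻¹ = s i := by group
    rw [h, eta_simple, if_pos rfl]
  have key3 : eta cs w (s i) + eta cs w⁻¹ (w * s i * w⁻¹) = 0 := eta_inv_add cs w (s i)
  rw [key, key2]
  have h2 : eta cs w⁻¹ (w * s i * w⁻¹) + 1 + eta cs w (s i)
      = (eta cs w (s i) + eta cs w⁻¹ (w * s i * w⁻¹)) + 1 := by ring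
  rw [h2, key3, zero_add]

lemma eta_mul_refl_self {t : W} (ht : cs.IsReflection t) (w : W) :
    eta cs (w * t) t = eta cs w t + 1 := by
  rw [eta_mul]
  have h : t * t * t⁻¹ = t := by
    rw [ht.mul_self, one_mul, ht.inv]
  rw [h, eta_refl_self cs ht]
  ring


lemma zmod_ne_one {x : ZMod 2} (h : x ≠ 1) : x = 0 := by
  revert h
  revert x
  decide

/-- `t` is a right inversion of `w` iff `η w t = 1`. -/
theorem eta_eq_one_iff (w t : W) (ht : cs.IsReflection t) :
    eta cs w t = 1 ↔ ℓ (w * t) < ℓ w := by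
  suffices H : ∀ n w t, cs.IsReflection t → ℓ w = n →
      (eta cs w t = 1 ↔ ℓ (w * t) < ℓ w) from H (ℓ w) w t ht rfl
  intro n
  induction n using Nat.strong_induction_on with
  | _ n IH =>
  intro w t ht hn
  by_cases hw : w = 1
  · subst hw
    simp only [one_mul, cs.length_one] at *
    constructor
    · intro h
      rw [eta_one] at h
      exact absurd h (by decide)
    · omega
  · obtain ⟨i, hi⟩ := cs.exists_leftDescent_of_ne_one hw
    have hlen : ℓ (s i * w) + 1 = ℓ w := (cs.isLeftDescent_iff).mp hi
    set w' := s i * w with hw'def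
    have hw' : w = s i * w' := (cs.simple_mul_simple_cancel_left i).symm
    have hlen' : ℓ w' + 1 = n := by rw [← hn]; exact hlen
    have heta : eta cs w t = eta cs w' t
        + (if w' * t * w'⁻¹ = s i then 1 else 0) := by
      rw [hw', eta_mul, eta_simple]
    by_cases hc : w' * t * w'⁻¹ = s i
    · have h2 : t = w'⁻¹ * s i * w' := (conj_eq_iff _ _ _).mp hc
      have hwt : w * t = w' := by
        rw [hw', h2]
        have : s i * w' * (w'⁻¹ * s i * w') = s i * (s i * w') := by group
        rw [this, cs.simple_mul_simple_cancel_left]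
      have hw't : w' * t = w := by
        rw [hw', h2]
        group
      have hIH := IH (ℓ w') (by omega) w' t ht rfl
      have hη' : eta cs w' t = 0 := by
        apply zmod_ne_one
        intro hone
        have := hIH.mp hone
        rw [hw't, hn] at this
        omega
      constructor
      · intro _
        rw [hwt]
        omega
      · intro _
        rw [heta, hη', if_pos hc, zero_add]
    · have heta2 : eta cs w t = eta cs w' t := by
        rw [heta, if_neg hc, add_zero]
      have hne' : ℓ (w' * t) ≠ ℓ w' := ht.length_mul_left_ne w'
      have hwt : w * t = s i * (w' * t) := by rw [hw', mul_assoc]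
      have hIH := IH (ℓ w') (by omega) w' t ht rfl
      rcases Nat.lt_or_gt_of_ne hne' with hlt | hgt
      · have hη' : eta cs w' t = 1 := hIH.mpr hlt
        have hb : ℓ (w * t) < ℓ w := by
          rcases cs.length_simple_mul (w' * t) i with h | h <;>
            rw [hwt] <;> omega
        simp [heta2, hη', hb]
      · have hη' : eta cs w' t = 0 := by
          apply zmod_ne_one
          intro hone
          have := hIH.mp hone
          omega
        have hb : ¬ ℓ (w * t) < ℓ w := by
          intro hlt2
          have hge : ℓ (w' * t) - 1 ≤ ℓ (w * t) := by
            rcases cs.length_simple_mul (w' * t) i with h | h <;>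
              rw [hwt] <;> omega
          have heq : ℓ (w * t) = ℓ w' := by omega
          have hIHu := IH (ℓ (w * t)) (by omega) (w * t) t ht rfl
          have hut : w * t * t = w := by
            rw [mul_assoc, ht.mul_self, mul_one]
          have hηu : eta cs (w * t) t = 0 := by
            apply zmod_ne_one
            intro hone
            have := hIHu.mp hone
            rw [hut] at this
            omega
          have : eta cs w t = 1 := by
            conv_lhs => rw [← hut]
            rw [eta_mul_refl_self cs ht, hηu, zero_add]
          rw [heta2, hη'] at this
          exact absurd this (by decide)
        constructor
        · intro h1
          rw [heta2, hη'] at h1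
          exact absurd h1 (by decide)
        · intro h1
          exact absurd h1 hb
/-- Strong exchange property. -/
theorem strong_exchange (ω : List B) (t : W) (ht : cs.IsReflection t)
    (hl : ℓ (π ω * t) < ℓ (π ω)) :
    ∃ j < ω.length, π ω * t = π (ω.eraseIdx j) := by
  have h1 : eta cs (π ω) t = 1 := (eta_eq_one_iff cs (π ω) t ht).mpr hl
  rw [eta_count] at h1
  have h3 : t ∈ ris ω := by
    by_contra hmem
    rw [List.count_eq_zero_of_not_mem hmem] at h1
    exact absurd h1 (by decide)
  obtain ⟨j, hj, hget⟩ := List.mem_iff_getElem.mp h3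
  have hj' : j < ω.length := by
    rw [cs.length_rightInvSeq] at hj
    exact hj
  refine ⟨j, hj', ?_⟩
  have hgetD : (ris ω).getD j 1 = t := by
    rw [List.getD_eq_getElem (ris ω) 1 hj, hget]
  rw [← hgetD]
  exact cs.wordProd_mul_getD_rightInvSeq ω j

lemma eraseIdx_append_left {α : Type*} (l₁ l₂ : List α) (m : ℕ) (h : m < l₁.length) :
    (l₁ ++ l₂).eraseIdx m = l₁.eraseIdx m ++ l₂ := by
  rw [List.eraseIdx_eq_take_drop_succ, List.eraseIdx_eq_take_drop_succ,
    List.take_append, List.drop_append]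
  have h1 : m - l₁.length = 0 := by omega
  have h3 : m + 1 - l₁.length = 0 := by omega
  rw [h1, h3, List.take_zero, List.append_nil, List.drop_zero, List.append_assoc]

lemma eraseIdx_append_right {α : Type*} (l₁ l₂ : List α) (m : ℕ) (h : l₁.length ≤ m) :
    (l₁ ++ l₂).eraseIdx m = l₁ ++ l₂.eraseIdx (m - l₁.length) := by
  rw [List.eraseIdx_eq_take_drop_succ, List.eraseIdx_eq_take_drop_succ,
    List.take_append, List.drop_append]
  have h1 : l₁.take m = l₁ := List.take_of_length_le h
  have h2 : l₁.drop (m + 1) = [] := List.drop_eq_nil_of_le (by omega)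
  have h3 : m + 1 - l₁.length = m - l₁.length + 1 := by omega
  rw [h1, h2, h3, List.nil_append, List.append_assoc]

/-- Deletion: from a non-reduced word one can remove two letters. -/
theorem deletion (ω : List B) (hω : ¬ cs.IsReduced ω) :
    ∃ k, k < ω.length ∧ cs.IsReduced (ω.take k) ∧ ¬ cs.IsReduced (ω.take (k + 1)) ∧ ∃ m, m < k ∧
      π ω = π ((ω.take k).eraseIdx m ++ ω.drop (k + 1)) := by
  have hex : ∃ r, ¬ cs.IsReduced (ω.take r) := ⟨ω.length, by rwa [List.take_length]⟩
  have hk0 : ¬ cs.IsReduced (ω.take (Nat.find hex)) := Nat.find_spec hex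
  have hk0pos : Nat.find hex ≠ 0 := by
    intro h
    rw [h] at hk0
    exact hk0 (by simp [CoxeterSystem.IsReduced])
  have hfle : Nat.find hex ≤ ω.length :=
    Nat.find_le (show ¬ cs.IsReduced (ω.take ω.length) by rwa [List.take_length])
  obtain ⟨k, hk⟩ : ∃ k, Nat.find hex = k + 1 := ⟨Nat.find hex - 1, by omega⟩
  rw [hk] at hk0
  have hkred : cs.IsReduced (ω.take k) := by
    by_contra h
    have h2 : Nat.find hex ≤ k := Nat.find_le h
    omega
  have hklt : k < ω.length := by omega
  have htake : ω.take (k + 1) = ω.take k ++ [ω[k]] := by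
    rw [List.take_succ, List.getElem?_eq_getElem hklt]
    rfl
  have hlen1 : ℓ (π (ω.take k)) = k := by
    have := hkred
    unfold CoxeterSystem.IsReduced at this
    rw [this, List.length_take]
    omega
  have hlt : ℓ (π (ω.take k) * s (ω[k])) < ℓ (π (ω.take k)) := by
    rcases cs.length_mul_simple (π (ω.take k)) (ω[k]) with h | h
    · exfalso
      apply hk0
      unfold CoxeterSystem.IsReduced
      rw [htake, cs.wordProd_append, cs.wordProd_singleton, h, hlen1,
        List.length_append, List.length_take, List.length_singleton]
      omega
    · omega
  obtain ⟨m, hm, hex2⟩ := strong_exchange cs (ω.take k) (s (ω[k]))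
    (cs.isReflection_simple _) hlt
  refine ⟨k, hklt, hkred, hk0, m, by rw [List.length_take] at hm; omega, ?_⟩
  have hsplit : π ω = π (ω.take (k + 1)) * π (ω.drop (k + 1)) := by
    rw [← cs.wordProd_append, List.take_append_drop]
  rw [hsplit, htake, cs.wordProd_append, cs.wordProd_singleton, hex2,
    cs.wordProd_append]

section Parabolic

variable (J : Set B)

/-- Products of `J`-letter words lie in the standard parabolic subgroup. -/
lemma wordProd_mem_parabolic {ω : List B} (h : ∀ i ∈ ω, i ∈ J) :
    π ω ∈ Subgroup.closure (cs.simple '' J) := by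
  induction ω with
  | nil =>
    rw [cs.wordProd_nil]
    exact one_mem _
  | cons i ω ih =>
    rw [cs.wordProd_cons]
    exact mul_mem (Subgroup.subset_closure ⟨i, h i (by simp), rfl⟩)
      (ih fun x hx => h x (by simp [hx]))

lemma exists_Jword {v : W} (hv : v ∈ Subgroup.closure (cs.simple '' J)) :
    ∃ ω : List B, (∀ i ∈ ω, i ∈ J) ∧ π ω = v := by
  induction hv using Subgroup.closure_induction with
  | mem x hx =>
    obtain ⟨i, hi, rfl⟩ := hx
    exact ⟨[i], by simpa using hi, cs.wordProd_singleton i⟩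
  | one => exact ⟨[], by simp, cs.wordProd_nil⟩
  | mul x y hx hy ihx ihy =>
    obtain ⟨ω₁, h₁, rfl⟩ := ihx
    obtain ⟨ω₂, h₂, rfl⟩ := ihy
    exact ⟨ω₁ ++ ω₂, by
      intro i hi
      rcases List.mem_append.mp hi with h | h
      exacts [h₁ i h, h₂ i h], cs.wordProd_append ω₁ ω₂⟩
  | inv x hx ihx =>
    obtain ⟨ω, h₁, rfl⟩ := ihx
    exact ⟨ω.reverse, fun i hi => h₁ i (List.mem_reverse.mp hi),
      cs.wordProd_reverse ω⟩

lemma exists_reduced_Jword {v : W} (hv : v ∈ Subgroup.closure (cs.simple '' J)) :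
    ∃ ω : List B, cs.IsReduced ω ∧ (∀ i ∈ ω, i ∈ J) ∧ π ω = v := by
  obtain ⟨ω, hJ, rfl⟩ := exists_Jword cs J hv
  clear hv
  generalize hn : ω.length = n
  induction n using Nat.strong_induction_on generalizing ω with
  | _ n IH =>
  by_cases hred : cs.IsReduced ω
  · exact ⟨ω, hred, hJ, rfl⟩
  · obtain ⟨k, hklt, -, -, m, hmk, heq⟩ := deletion cs ω hred
    set ω₂ := (ω.take k).eraseIdx m ++ ω.drop (k + 1) with hω₂
    have hJ₂ : ∀ i ∈ ω₂, i ∈ J := by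
      intro i hi
      rcases List.mem_append.mp hi with h | h
      · exact hJ i (List.take_subset k ω (List.eraseIdx_subset h))
      · exact hJ i (List.drop_subset _ ω h)
    have hlen₂ : ω₂.length < n := by
      have h1 : (ω.take k).length = k := by
        rw [List.length_take]; omega
      have h2 : ((ω.take k).eraseIdx m).length + 1 = k := by
        rw [List.length_eraseIdx_add_one (by omega : m < (ω.take k).length), h1]
      rw [hω₂, List.length_append, List.length_drop]
      omega
    obtain ⟨ω', h1, h2, h3⟩ := IH ω₂.length hlen₂ ω₂ hJ₂ rfl
    exact ⟨ω', h1, h2, h3.trans heq.symm⟩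

lemma descent_of_Jword {v : W} (hv : v ∈ Subgroup.closure (cs.simple '' J))
    (hne : v ≠ 1) : ∃ j ∈ J, ℓ (v * s j) < ℓ v := by
  obtain ⟨ω, hred, hJ, rfl⟩ := exists_reduced_Jword cs J hv
  rcases List.eq_nil_or_concat ω with rfl | ⟨ω₀, j, rfl⟩
  · simp at hne
  · refine ⟨j, hJ j (by simp), ?_⟩
    have h1 : π (ω₀.concat j) * s j = π ω₀ := by
      rw [cs.wordProd_concat, cs.simple_mul_simple_cancel_right]
    rw [h1]
    have h2 : ℓ (π ω₀) ≤ ω₀.length := cs.length_wordProd_le ω₀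
    have h3 : ℓ (π (ω₀.concat j)) = ω₀.length + 1 := by
      have := hred
      unfold CoxeterSystem.IsReduced at this
      rw [this, List.concat_eq_append, List.length_append]
      simp
    omega

/-- A coset-minimal element is length-additive on the parabolic subgroup. -/
lemma coset_min_additive (u : W)
    (hmin : ∀ v ∈ Subgroup.closure (cs.simple '' J), ℓ u ≤ ℓ (u * v)) :
    ∀ v ∈ Subgroup.closure (cs.simple '' J), ℓ (u * v) = ℓ u + ℓ v := by
  intro v hv
  obtain ⟨ωu, hωu, hu⟩ := cs.exists_reduced_word' u
  obtain ⟨ωv, hωv, hωvJ, hv'⟩ := exists_reduced_Jword cs J hv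
  suffices red : cs.IsReduced (ωu ++ ωv) by
    have h1 : ℓ (π (ωu ++ ωv)) = (ωu ++ ωv).length := red
    rw [cs.wordProd_append, hv', ← hu, List.length_append] at h1
    have h2 : ℓ u = ωu.length := by rw [hu]; exact hωu
    have h3 : ℓ v = ωv.length := by rw [← hv']; exact hωv
    omega
  by_contra hnred
  obtain ⟨k, hklt, hkred, hknred, m, hmk, heq⟩ := deletion cs (ωu ++ ωv) hnred
  rw [List.length_append] at hklt
  have hωulen : ℓ u = ωu.length := by rw [hu]; exact hωu
  have hωvlen : ℓ v = ωv.length := by rw [← hv']; exact hωv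
  -- k is at least the length of ωu
  have hk1 : ωu.length ≤ k := by
    by_contra h
    push_neg at h
    apply hknred
    have htk : (ωu ++ ωv).take (k + 1) = ωu.take (k + 1) ++ ωv.take (k + 1 - ωu.length) :=
      List.take_append
    have h5 : k + 1 - ωu.length = 0 := by omega
    rw [htk, h5, List.take_zero, List.append_nil]
    exact hωu.take (k + 1)
  set a := k - ωu.length with ha
  have hka : k = ωu.length + a := by omega
  have halt : a < ωv.length := by omega
  have htake : (ωu ++ ωv).take k = ωu ++ ωv.take a := by
    rw [List.take_append, List.take_of_length_le (by omega), hka]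
    congr 2
    omega
  have hdrop : (ωu ++ ωv).drop (k + 1) = ωv.drop (a + 1) := by
    rw [List.drop_append, List.drop_eq_nil_of_le (by omega)]
    rw [List.nil_append]
    congr 1
    omega
  by_cases hm : m < ωu.length
  · -- the erased letter is in ωu : contradicts coset minimality of u
    have herase : ((ωu ++ ωv.take a).eraseIdx m) = ωu.eraseIdx m ++ ωv.take a :=
      eraseIdx_append_left _ _ m hm
    rw [htake, hdrop, herase, List.append_assoc, cs.wordProd_append,
      cs.wordProd_append, ← hu, hv'] at heq
    set z := π (ωu.eraseIdx m) with hz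
    set vv := π (ωv.take a ++ ωv.drop (a + 1)) with hvv
    have hvvJ : vv ∈ Subgroup.closure (cs.simple '' J) := by
      apply wordProd_mem_parabolic
      intro i hi
      rcases List.mem_append.mp hi with h | h
      · exact hωvJ i (List.take_subset _ ωv h)
      · exact hωvJ i (List.drop_subset _ ωv h)
    have heq2 : u * v = z * vv := heq
    have hz2 : u * (v * vv⁻¹) = z := by
      rw [← mul_assoc, heq2]
      group
    have hmem : v * vv⁻¹ ∈ Subgroup.closure (cs.simple '' J) :=
      mul_mem hv (inv_mem hvvJ)
    have hzlen : ℓ z + 1 ≤ ωu.length := by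
      have h6 : ℓ z ≤ (ωu.eraseIdx m).length := cs.length_wordProd_le _
      have h7 : (ωu.eraseIdx m).length + 1 = ωu.length :=
        List.length_eraseIdx_add_one (by omega)
      omega
    have := hmin (v * vv⁻¹) hmem
    rw [hz2] at this
    omega
  · -- the erased letter is in ωv : contradicts reducedness of ωv
    push_neg at hm
    have herase : ((ωu ++ ωv.take a).eraseIdx m)
        = ωu ++ (ωv.take a).eraseIdx (m - ωu.length) :=
      eraseIdx_append_right _ _ m hm
    rw [htake, hdrop, herase, List.append_assoc, cs.wordProd_append,
      cs.wordProd_append, ← hu, hv'] at heq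
    have hveq : v = π ((ωv.take a).eraseIdx (m - ωu.length) ++ ωv.drop (a + 1)) :=
      mul_left_cancel heq
    have h6 : ℓ v ≤ ((ωv.take a).eraseIdx (m - ωu.length) ++ ωv.drop (a + 1)).length := by
      rw [hveq]; exact cs.length_wordProd_le _
    have h7 : ((ωv.take a).eraseIdx (m - ωu.length)).length + 1 = a := by
      rw [List.length_eraseIdx_add_one]
      · rw [List.length_take]; omega
      · rw [List.length_take]; omega
    rw [List.length_append, List.length_drop] at h6
    omega

/-- If `u` has no right descents in `J`, multiplication by the parabolic subgroup
generated by `J` is length-additive. -/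
lemma no_descent_additive (u : W)
    (hD : ∀ j ∈ J, ¬ cs.IsRightDescent u j) :
    ∀ v ∈ Subgroup.closure (cs.simple '' J), ℓ (u * v) = ℓ u + ℓ v := by
  set P := Subgroup.closure (cs.simple '' J) with hP
  have hT : (Set.range (fun v : P => ℓ (u * v))).Nonempty := ⟨ℓ (u * 1), ⟨1, rfl⟩⟩
  have hminv : ∀ v ∈ P, sInf (Set.range (fun v : P => ℓ (u * v))) ≤ ℓ (u * v) := by
    intro v hv
    exact Nat.sInf_le ⟨⟨v, hv⟩, rfl⟩
  obtain ⟨v₀, hv₀len⟩ := Nat.sInf_mem hT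
  simp only [] at hv₀len
  have hmin : ∀ v ∈ P, ℓ (u * ↑v₀) ≤ ℓ ((u * ↑v₀) * v) := by
    intro v hv
    rw [mul_assoc]
    calc ℓ (u * ↑v₀) = sInf (Set.range fun v : P => ℓ (u * ↑v)) := hv₀len
      _ ≤ ℓ (u * (↑v₀ * v)) := hminv (↑v₀ * v) (mul_mem v₀.2 hv)
  have hadd := coset_min_additive cs J (u * ↑v₀) hmin
  by_cases hv1 : (v₀ : W) = 1
  · rw [hv1, mul_one] at hadd
    exact hadd
  · exfalso
    have hv₀inv : (↑v₀ : W)⁻¹ ∈ P := inv_mem v₀.2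
    have hne : (↑v₀ : W)⁻¹ ≠ 1 := by simpa using hv1
    obtain ⟨j, hjJ, hdesc⟩ := descent_of_Jword cs J hv₀inv hne
    apply hD j hjJ
    show ℓ (u * s j) < ℓ u
    have e1 : ℓ (u * s j) = ℓ (u * ↑v₀) + ℓ ((↑v₀ : W)⁻¹ * s j) := by
      have h : u * s j = (u * ↑v₀) * ((↑v₀ : W)⁻¹ * s j) := by group
      rw [h]
      exact hadd _ (mul_mem hv₀inv (Subgroup.subset_closure ⟨j, hjJ, rfl⟩))
    have e2 : ℓ u = ℓ (u * ↑v₀) + ℓ ((↑v₀ : W)⁻¹) := by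
      have h : u = (u * ↑v₀) * (↑v₀ : W)⁻¹ := by group
      conv_lhs => rw [h]
      exact hadd _ hv₀inv
    omega

end Parabolic
end CoxAux

open CoxAux in
/-- The collection of extensions `{E_w : w ∈ W}` is linearly
independent over `F₂`. -/
theorem coxeter_extensions_linearIndependent
    {B W : Type*} [Fintype B] [Group W] [Fintype W]
    {M : CoxeterMatrix B} (cs : CoxeterSystem M W) :
    LinearIndependent (ZMod 2) (fun w : W => coxeterExtension cs w) := by
  classical
  rw [Fintype.linearIndependent_iff]
  intro g hg
  by_contra hne
  push_neg at hne
  obtain ⟨w₀, hw₀⟩ := hne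
  set U : Finset W := Finset.univ.filter (fun w => g w ≠ 0) with hU
  have hUne : U.Nonempty := ⟨w₀, by simp [hU, hw₀]⟩
  obtain ⟨w, hwU, hwmin⟩ := U.exists_min_image (fun w => cs.length w) hUne
  have hgw : g w ≠ 0 := by simpa [hU] using hwU
  have hEww : coxeterExtension cs w w = 1 := by
    unfold coxeterExtension
    rw [Set.indicator_of_mem]
    exact ⟨1, one_mem _, by simp⟩
  have hzero : ∀ u, u ≠ w → g u * coxeterExtension cs u w = 0 := by
    intro u hu
    by_cases hgu : g u = 0
    · rw [hgu, zero_mul]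
    · have huU : u ∈ U := by simp [hU, hgu]
      have hlen : cs.length w ≤ cs.length u := hwmin u huU
      have hEuw : coxeterExtension cs u w = 0 := by
        unfold coxeterExtension
        rw [Set.indicator_of_notMem]
        intro hmem
        obtain ⟨v, hv, hveq⟩ := hmem
        have hw' : w = u * v := hveq.symm
        have hD : ∀ j ∈ {i : B | ¬ cs.IsRightDescent u i}, ¬ cs.IsRightDescent u j :=
          fun j hj => hj
        have hadd := no_descent_additive cs {i : B | ¬ cs.IsRightDescent u i} u hD v hv
        have hvne : v ≠ 1 := by
          intro h
          rw [h, mul_one] at hw'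
          exact hu hw'.symm
        have hvlen : 1 ≤ cs.length v := by
          rcases Nat.eq_zero_or_pos (cs.length v) with h | h
          · exact absurd (cs.length_eq_zero_iff.mp h) hvne
          · omega
        rw [← hw'] at hadd
        omega
      rw [hEuw, mul_zero]
  have hsum := congrFun hg w
  rw [Finset.sum_apply] at hsum
  have hsum2 : ∑ u : W, g u * coxeterExtension cs u w = 0 := by
    simp only [Pi.smul_apply, smul_eq_mul, Pi.zero_apply] at hsum
    exact hsum
  rw [Finset.sum_eq_single w (fun u _ hu => hzero u hu) (by simp)] at hsum2
  rw [hEww, mul_one] at hsum2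
  exact hgw hsum2
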